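/- arXiv:1812.03105 — 3 statements merged into one kernel-verified Lean document; each statement's English description precedes it below -/
import Mathlib

section
/- Fix d_max ≥ 1, nonnegative initial values x̃_i(0) (i = 0,...,d_max), ỹ_E(0), z̃_E(0), and p_I ∈ [0,1], q_I = 1 - p_I. Consider the ODE system on [0,∞): dx̃_i/dt = -i x̃_i for each i; dỹ_E/dt = Σ_{i=2}^{d_max} i(i-1) p_I x̃_i - x̃_E - 2 ỹ_E - z̃_E, where x̃_E = Σ_{i=1}^{d_max} i x̃_i; and dz̃_E/dt = Σ_{i=2}^{d_max} i(i-1) q_I x̃_i - z̃_E. Then the unique solution is x̃_i(t) = x̃_i(0) e^{-it}, z̃_E(t) = [z̃_E(0) + q_I x̃_E(0)] e^{-t} - q_I Σ_{i=1}^{d_max} i x̃_i(0) e^{-it}, and ỹ_E(t) = (x̃_E(0) + ỹ_E(0) + z̃_E(0)) e^{-2t} - [z̃_E(0) + q_I x̃_E(0)] e^{-t} - p_I Σ_{i=1}^{d_max} i x̃_i(0) e^{-it}. -/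
lemma hasDerivAt_exp_mul (c t : ℝ) :
    HasDerivAt (fun s => Real.exp (c * s)) (c * Real.exp (c * t)) t := by
  simpa [mul_comm, Function.comp_def] using (Real.hasDerivAt_exp (c * t)).comp t ((hasDerivAt_id t).const_mul c)

lemma hasDerivAt_exp_neg (t : ℝ) :
    HasDerivAt (fun s => Real.exp (-s)) (-Real.exp (-t)) t := by
  simpa [neg_one_mul] using hasDerivAt_exp_mul (-1) t

lemma exp_decay_unique (c : ℝ) (f : ℝ → ℝ)
    (hf : ∀ t ≥ (0 : ℝ), HasDerivAt f (-c * f t) t) :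
    ∀ t ≥ (0 : ℝ), f t = f 0 * Real.exp (-c * t) := by
  intro t ht
  have key : ∀ s ∈ Set.Icc (0 : ℝ) t, f s * Real.exp (c * s) = f 0 * Real.exp (c * 0) := by
    intro s hs
    apply constant_of_has_deriv_right_zero (f := fun s => f s * Real.exp (c * s))
      (fun u hu => (((hf u hu.1).mul (hasDerivAt_exp_mul c u)).continuousAt).continuousWithinAt)
      (fun u hu => ?_) s hs
    have h := (hf u hu.1).mul (hasDerivAt_exp_mul c u)
    have : -c * f u * Real.exp (c * u) + f u * (c * Real.exp (c * u)) = 0 := by ring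
    rw [this] at h
    exact h.hasDerivWithinAt
  have h := key t ⟨ht, le_refl t⟩
  rw [mul_comm] at h
  have he : Real.exp (c * 0) = 1 := by norm_num
  rw [he, mul_one] at h
  have : f t = f 0 * (Real.exp (c * t))⁻¹ := by
    field_simp
    linarith [h]
  rw [this, ← Real.exp_neg]
  ring_nf

/-- Explicit solution of the deterministic (LLN-limit) system for the time-transformed
SIR epidemic on a configuration model graph: any solution of the ODE system equals the
stated exponential formulas. -/
theorem deterministic_system_solution
    (dmax : ℕ) (hd : 1 ≤ dmax)
    (x : ℕ → ℝ → ℝ) (y z : ℝ → ℝ)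
    (pI qI : ℝ) (hpI : pI ∈ Set.Icc (0 : ℝ) 1) (hq : qI = 1 - pI)
    (hx0 : ∀ i ≤ dmax, 0 ≤ x i 0) (hy0 : 0 ≤ y 0) (hz0 : 0 ≤ z 0)
    (xE : ℝ → ℝ) (hxE : ∀ t, xE t = ∑ i ∈ Finset.Icc 1 dmax, (i : ℝ) * x i t)
    (hdx : ∀ i ≤ dmax, ∀ t ≥ (0 : ℝ), HasDerivAt (x i) (-(i : ℝ) * x i t) t)
    (hdy : ∀ t ≥ (0 : ℝ), HasDerivAt y
      ((∑ i ∈ Finset.Icc 2 dmax, (i : ℝ) * ((i : ℝ) - 1) * pI * x i t)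
        - xE t - 2 * y t - z t) t)
    (hdz : ∀ t ≥ (0 : ℝ), HasDerivAt z
      ((∑ i ∈ Finset.Icc 2 dmax, (i : ℝ) * ((i : ℝ) - 1) * qI * x i t) - z t) t) :
    ∀ t ≥ (0 : ℝ),
      (∀ i ≤ dmax, x i t = x i 0 * Real.exp (-(i : ℝ) * t))
      ∧ z t = (z 0 + qI * xE 0) * Real.exp (-t)
          - qI * ∑ i ∈ Finset.Icc 1 dmax, (i : ℝ) * x i 0 * Real.exp (-(i : ℝ) * t)
      ∧ y t = (xE 0 + y 0 + z 0) * Real.exp (-2 * t)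
          - (z 0 + qI * xE 0) * Real.exp (-t)
          - pI * ∑ i ∈ Finset.Icc 1 dmax, (i : ℝ) * x i 0 * Real.exp (-(i : ℝ) * t) := by
  subst hq
  -- solution for x
  have hxsol : ∀ i ≤ dmax, ∀ t ≥ (0 : ℝ), x i t = x i 0 * Real.exp (-(i : ℝ) * t) :=
    fun i hi => exp_decay_unique (i : ℝ) (x i) (hdx i hi)
  -- S1 at time 0 equals xE 0
  have hS10 : ∑ i ∈ Finset.Icc 1 dmax, (i : ℝ) * x i 0 * Real.exp (-(i : ℝ) * 0) = xE 0 := by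
    rw [hxE 0]
    exact Finset.sum_congr rfl fun i _ => by simp
  -- xE t in terms of initial data
  have hxEt : ∀ t ≥ (0 : ℝ), xE t
      = ∑ i ∈ Finset.Icc 1 dmax, (i : ℝ) * (x i 0 * Real.exp (-(i : ℝ) * t)) := by
    intro t ht
    rw [hxE t]
    exact Finset.sum_congr rfl fun i hi => by
      rw [hxsol i (Finset.mem_Icc.mp hi).2 t ht]
  -- the key sum identity for the ODE right-hand sides
  have hodes : ∀ (a t : ℝ), t ≥ 0 →
      ∑ i ∈ Finset.Icc 2 dmax, (i : ℝ) * ((i : ℝ) - 1) * a * x i t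
      = a * ((∑ i ∈ Finset.Icc 1 dmax, (i : ℝ) * ((i : ℝ) * x i 0 * Real.exp (-(i : ℝ) * t)))
          - ∑ i ∈ Finset.Icc 1 dmax, (i : ℝ) * x i 0 * Real.exp (-(i : ℝ) * t)) := by
    intro a t ht
    have h1 : ∀ i ∈ Finset.Icc 2 dmax, (i : ℝ) * ((i : ℝ) - 1) * a * x i t
        = a * ((i : ℝ) * ((i : ℝ) * x i 0 * Real.exp (-(i : ℝ) * t))
            - (i : ℝ) * x i 0 * Real.exp (-(i : ℝ) * t)) := by
      intro i hi
      rw [hxsol i (Finset.mem_Icc.mp hi).2 t ht]; ring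
    rw [Finset.sum_congr rfl h1, ← Finset.mul_sum]
    congr 1
    rw [← Finset.sum_sub_distrib]
    apply Finset.sum_subset (Finset.Icc_subset_Icc_left one_le_two)
    intro i hi hni
    have h1i : i = 1 := by
      simp only [Finset.mem_Icc] at hi hni; omega
    subst h1i
    push_cast
    ring
  -- derivative of the sum S1
  have hS1d : ∀ t : ℝ, HasDerivAt
      (fun s => ∑ i ∈ Finset.Icc 1 dmax, (i : ℝ) * x i 0 * Real.exp (-(i : ℝ) * s))
      (-(∑ i ∈ Finset.Icc 1 dmax, (i : ℝ) * ((i : ℝ) * x i 0 * Real.exp (-(i : ℝ) * t)))) t := by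
    intro t
    have h : HasDerivAt
        (fun s => ∑ i ∈ Finset.Icc 1 dmax, (i : ℝ) * x i 0 * Real.exp (-(i : ℝ) * s))
        (∑ i ∈ Finset.Icc 1 dmax, (i : ℝ) * x i 0 * (-(i : ℝ) * Real.exp (-(i : ℝ) * t))) t :=
      HasDerivAt.fun_sum fun i _ => (hasDerivAt_exp_mul (-(i : ℝ)) t).const_mul ((i : ℝ) * x i 0)
    convert h using 1
    rw [← Finset.sum_neg_distrib]
    exact Finset.sum_congr rfl fun i _ => by ring
  -- solution for z
  have hzs : ∀ t ≥ (0 : ℝ), z t = (z 0 + (1 - pI) * xE 0) * Real.exp (-t)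
      - (1 - pI) * ∑ i ∈ Finset.Icc 1 dmax, (i : ℝ) * x i 0 * Real.exp (-(i : ℝ) * t) := by
    have hder : ∀ t ≥ (0 : ℝ), HasDerivAt
        (fun s => z s - ((z 0 + (1 - pI) * xE 0) * Real.exp (-s)
          - (1 - pI) * ∑ i ∈ Finset.Icc 1 dmax, (i : ℝ) * x i 0 * Real.exp (-(i : ℝ) * s)))
        (-1 * (z t - ((z 0 + (1 - pI) * xE 0) * Real.exp (-t)
          - (1 - pI) * ∑ i ∈ Finset.Icc 1 dmax, (i : ℝ) * x i 0 * Real.exp (-(i : ℝ) * t)))) t := by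
      intro t ht
      have h := (hdz t ht).sub
        (((hasDerivAt_exp_neg t).const_mul (z 0 + (1 - pI) * xE 0)).sub
          ((hS1d t).const_mul (1 - pI)))
      convert h using 1
      case e'_4 => rfl
      case e'_5 => rfl
      case e'_8 => rfl
      rw [hodes (1 - pI) t ht]
      ring
    have key := exp_decay_unique 1 _ hder
    intro t ht
    have h2 := key t ht
    have hF0 : z 0 - ((z 0 + (1 - pI) * xE 0) * Real.exp (-(0 : ℝ))
        - (1 - pI) * ∑ i ∈ Finset.Icc 1 dmax, (i : ℝ) * x i 0 * Real.exp (-(i : ℝ) * 0)) = 0 := by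
      rw [hS10]; simp
    rw [hF0, zero_mul] at h2
    linarith [h2]
  -- solution for y
  have hys : ∀ t ≥ (0 : ℝ), y t = (xE 0 + y 0 + z 0) * Real.exp (-2 * t)
      - (z 0 + (1 - pI) * xE 0) * Real.exp (-t)
      - pI * ∑ i ∈ Finset.Icc 1 dmax, (i : ℝ) * x i 0 * Real.exp (-(i : ℝ) * t) := by
    have hder : ∀ t ≥ (0 : ℝ), HasDerivAt
        (fun s => y s - ((xE 0 + y 0 + z 0) * Real.exp (-2 * s)
          - (z 0 + (1 - pI) * xE 0) * Real.exp (-s)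
          - pI * ∑ i ∈ Finset.Icc 1 dmax, (i : ℝ) * x i 0 * Real.exp (-(i : ℝ) * s)))
        (-2 * (y t - ((xE 0 + y 0 + z 0) * Real.exp (-2 * t)
          - (z 0 + (1 - pI) * xE 0) * Real.exp (-t)
          - pI * ∑ i ∈ Finset.Icc 1 dmax, (i : ℝ) * x i 0 * Real.exp (-(i : ℝ) * t)))) t := by
      intro t ht
      have h := (hdy t ht).sub
        ((((hasDerivAt_exp_mul (-2) t).const_mul (xE 0 + y 0 + z 0)).sub
          ((hasDerivAt_exp_neg t).const_mul (z 0 + (1 - pI) * xE 0))).sub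
          ((hS1d t).const_mul pI))
      convert h using 1
      case e'_4 => rfl
      case e'_5 => rfl
      case e'_8 => rfl
      rw [hodes pI t ht, hxEt t ht, hzs t ht]
      have hmt : ∀ i ∈ Finset.Icc 1 dmax,
          (i : ℝ) * (x i 0 * Real.exp (-(i : ℝ) * t))
            = (i : ℝ) * x i 0 * Real.exp (-(i : ℝ) * t) :=
        fun i _ => by ring
      rw [Finset.sum_congr rfl hmt]
      ring
    have key := exp_decay_unique 2 _ hder
    intro t ht
    have h2 := key t ht
    have hG0 : y 0 - ((xE 0 + y 0 + z 0) * Real.exp (-2 * (0 : ℝ))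
        - (z 0 + (1 - pI) * xE 0) * Real.exp (-(0 : ℝ))
        - pI * ∑ i ∈ Finset.Icc 1 dmax, (i : ℝ) * x i 0 * Real.exp (-(i : ℝ) * 0)) = 0 := by
      rw [hS10]; simp; ring
    rw [hG0, zero_mul] at h2
    linarith [h2]
  intro t ht
  exact ⟨fun i hi => hxsol i hi t ht, hzs t ht, hys t ht⟩
end

section
/- Under the ODE system dx̃_i/dt = -i x̃_i (i = 1,...,d_max), dỹ_E/dt = Σ_i i(i-1)p_I x̃_i - x̃_E - 2ỹ_E - z̃_E, dz̃_E/dt = Σ_i i(i-1)q_I x̃_i - z̃_E with x̃_E = Σ_i i x̃_i, the quantity η̃ = x̃_E + ỹ_E + z̃_E satisfies η̃(t) = η̃(0) e^{-2t} for all t ≥ 0. -/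
/-- Under the deterministic limiting system for the time-transformed SIR epidemic, the
total half-edge density `η̃ = x̃_E + ỹ_E + z̃_E` satisfies `η̃(t) = η̃(0) e^{-2t}`. -/
theorem eta_decay
    (dmax : ℕ) (hd : 1 ≤ dmax)
    (x : ℕ → ℝ → ℝ) (y z : ℝ → ℝ)
    (pI qI : ℝ) (hpq : pI + qI = 1)
    (xE : ℝ → ℝ) (hxE : ∀ t, xE t = ∑ i ∈ Finset.Icc 1 dmax, (i : ℝ) * x i t)
    (hdx : ∀ i ≤ dmax, ∀ t ≥ (0 : ℝ), HasDerivAt (x i) (-(i : ℝ) * x i t) t)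
    (hdy : ∀ t ≥ (0 : ℝ), HasDerivAt y
      ((∑ i ∈ Finset.Icc 2 dmax, (i : ℝ) * ((i : ℝ) - 1) * pI * x i t)
        - xE t - 2 * y t - z t) t)
    (hdz : ∀ t ≥ (0 : ℝ), HasDerivAt z
      ((∑ i ∈ Finset.Icc 2 dmax, (i : ℝ) * ((i : ℝ) - 1) * qI * x i t) - z t) t)
    (η : ℝ → ℝ) (hη : ∀ t, η t = xE t + y t + z t) :
    ∀ t ≥ (0 : ℝ), η t = η 0 * Real.exp (-2 * t) := by
  -- derivative of η
  have hη' : ∀ t ≥ (0 : ℝ), HasDerivAt η (-2 * η t) t := by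
    intro t ht
    have hxE' : HasDerivAt (fun s => ∑ i ∈ Finset.Icc 1 dmax, (i : ℝ) * x i s)
        (∑ i ∈ Finset.Icc 1 dmax, (i : ℝ) * (-(i : ℝ) * x i t)) t := by
      refine HasDerivAt.fun_sum ?_
      intro i hi
      exact (hdx i (Finset.mem_Icc.mp hi).2 t ht).const_mul _
    have hsum := (hxE'.add (hdy t ht)).add (hdz t ht)
    have hfun : η = fun s => (∑ i ∈ Finset.Icc 1 dmax, (i : ℝ) * x i s) + y s + z s := by
      funext s; rw [hη s, hxE s]
    rw [hfun]
    refine hsum.congr_deriv ?_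
    -- algebraic identity on the derivative values
    have hq : (∑ i ∈ Finset.Icc 2 dmax, (i : ℝ) * ((i : ℝ) - 1) * pI * x i t)
        + (∑ i ∈ Finset.Icc 2 dmax, (i : ℝ) * ((i : ℝ) - 1) * qI * x i t)
        = ∑ i ∈ Finset.Icc 2 dmax, (i : ℝ) * ((i : ℝ) - 1) * x i t := by
      rw [← Finset.sum_add_distrib]
      refine Finset.sum_congr rfl fun i hi => ?_
      have : (i : ℝ) * ((i : ℝ) - 1) * pI * x i t + (i : ℝ) * ((i : ℝ) - 1) * qI * x i t
          = (i : ℝ) * ((i : ℝ) - 1) * (pI + qI) * x i t := by ring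
      rw [this, hpq]; ring
    have hext : (∑ i ∈ Finset.Icc 2 dmax, (i : ℝ) * ((i : ℝ) - 1) * x i t)
        = ∑ i ∈ Finset.Icc 1 dmax, (i : ℝ) * ((i : ℝ) - 1) * x i t := by
      refine Finset.sum_subset (Finset.Icc_subset_Icc_left (by norm_num)) ?_
      intro i hi hni
      have h1 : 1 ≤ i := (Finset.mem_Icc.mp hi).1
      have h2 : i ≤ dmax := (Finset.mem_Icc.mp hi).2
      have : i = 1 := by
        by_contra h
        exact hni (Finset.mem_Icc.mpr ⟨by omega, h2⟩)
      subst this; norm_num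
    have hcomb : (∑ i ∈ Finset.Icc 1 dmax, (i : ℝ) * (-(i : ℝ) * x i t))
        + (∑ i ∈ Finset.Icc 1 dmax, (i : ℝ) * ((i : ℝ) - 1) * x i t)
        = -(∑ i ∈ Finset.Icc 1 dmax, (i : ℝ) * x i t) := by
      rw [← Finset.sum_add_distrib, ← Finset.sum_neg_distrib]
      refine Finset.sum_congr rfl fun i hi => by ring
    have hη2 : η t = (∑ i ∈ Finset.Icc 1 dmax, (i : ℝ) * x i t) + y t + z t := by
      rw [hη t, hxE t]
    rw [hxE t]
    linarith [hq, hext, hcomb]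
  -- pass to g t = η t * exp (2 t), which has zero derivative on [0, ∞)
  intro t ht
  set g : ℝ → ℝ := fun s => η s * Real.exp (2 * s) with hg
  have hg' : ∀ s ≥ (0 : ℝ), HasDerivAt g 0 s := by
    intro s hs
    have he : HasDerivAt (fun u : ℝ => Real.exp (2 * u)) (2 * Real.exp (2 * s)) s := by
      have := ((hasDerivAt_id s).const_mul 2).exp
      simpa [mul_comm] using this
    have := (hη' s hs).mul he
    refine this.congr_deriv ?_
    ring
  have hconst : g t = g 0 := by
    rcases eq_or_lt_of_le ht with h | h
    · rw [← h]
    · have hcont : ContinuousOn g (Set.Icc 0 t) := fun s hs =>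
        ((hg' s hs.1).continuousAt).continuousWithinAt
      have hderiv : ∀ s ∈ Set.Ico (0 : ℝ) t, HasDerivWithinAt g 0 (Set.Ici s) s :=
        fun s hs => (hg' s hs.1).hasDerivWithinAt
      exact (constant_of_has_deriv_right_zero hcont hderiv t (Set.right_mem_Icc.mpr ht))
  have : η t * Real.exp (2 * t) = η 0 * 1 := by
    simpa [hg] using hconst
  have hexp : Real.exp (2 * t) ≠ 0 := Real.exp_ne_zero _
  rw [show (-2 : ℝ) * t = -(2 * t) by ring, Real.exp_neg]
  field_simp
  linarith [this]
end

section
/- Let the degree distribution D be non-degenerate (not concentrated at a single point) with bounded support. Then the asymptotic final-size variance for the SIR epidemic on the Newman–Strogatz–Watts random graph strictly exceeds that on the Molloy–Reed random graph: σ²_NSW > σ²_MR. Specifically, σ²_NSW - σ²_MR = (1-ε) c Σ_{XX} cᵀ + ε h(z)² (z - q_I)² σ_D² > 0, where c = c(τ̃,0) restricted to susceptible coordinates, Σ_{XX} is the positive semidefinite multinomial covariance matrix of (p_i), h(z) = b(τ̃)z, and σ_D² = Var(D) > 0. -/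
set_option maxHeartbeats 2000000


/-- Comparison of the asymptotic final-size variances for the SIR epidemic on NSW
(i.i.d. degrees) and MR (prescribed degrees) configuration model graphs with a positive
limiting initial fraction `ε` of infectives and `ε_i = ε p_i`: if the degree
distribution `D` is non-degenerate then
`σ²_NSW - σ²_MR = (1-ε) c Σ_XX cᵀ + ε h(z)² (z-q_I)² σ_D² > 0`,
where `c = c(τ̃,0)` restricted to the susceptible coordinates, `Σ_XX` is the
multinomial covariance matrix of `(p_i)`, and `h(z) = b(τ̃) z`. -/
theorem NSW_variance_exceeds_MR
    (dmax : ℕ) (p : ℕ → ℝ) (hp : ∀ i, 0 ≤ p i)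
    (hsum : ∑ i ∈ Finset.range (dmax + 1), p i = 1)
    -- D non-degenerate (not concentrated at a single point)
    (hnd : ∃ i j, i ≤ dmax ∧ j ≤ dmax ∧ i ≠ j ∧ 0 < p i ∧ 0 < p j)
    (ε : ℝ) (hε0 : 0 < ε) (hε1 : ε < 1)
    (pI qI q2 : ℝ) (hpI : 0 < pI) (hpI1 : pI ≤ 1) (hq : qI = 1 - pI)
    (hq2lb : qI ^ 2 ≤ q2) (hq2ub : q2 ≤ qI)
    -- conditions of Theorem 1: some individuals of positive degree, and p₁ > 0 if p_I = 1
    (hdeg : ∃ i, 1 ≤ i ∧ i ≤ dmax ∧ 0 < p i)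
    (hp1 : pI = 1 → 0 < p 1)
    (μD σD2 : ℝ)
    (hμD : μD = ∑ i ∈ Finset.range (dmax + 1), (i : ℝ) * p i) (hμpos : 0 < μD)
    (hσD2 : σD2 = (∑ i ∈ Finset.range (dmax + 1), (i : ℝ) ^ 2 * p i) - μD ^ 2)
    -- the pgf f_D and its first two derivatives
    (f0 f1 f2 : ℝ → ℝ)
    (hf0 : ∀ s, f0 s = ∑ i ∈ Finset.range (dmax + 1), p i * s ^ i)
    (hf1 : ∀ s, f1 s = ∑ i ∈ Finset.range (dmax + 1), (i : ℝ) * p i * s ^ (i - 1))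
    (hf2 : ∀ s, f2 s = ∑ i ∈ Finset.range (dmax + 1), (i : ℝ) * ((i : ℝ) - 1) * p i * s ^ (i - 2))
    -- the root z of the final size equation (with f_{D,ε} = (1-ε) f_D) and ρ
    (z : ℝ) (hz0 : 0 < z) (hz1 : z < 1)
    (hzeq : z - qI = μD⁻¹ * pI * ((1 - ε) * f1 z))
    (ρ : ℝ) (hρ : ρ = 1 - ε - (1 - ε) * f0 z)
    -- h(z) = b(τ̃) z
    (h b : ℝ) (hden : 0 < 1 - pI * μD⁻¹ * ((1 - ε) * f2 z))
    (hh : h = pI⁻¹ * (qI - z) / (1 - pI * μD⁻¹ * ((1 - ε) * f2 z)))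
    (hb : h = b * z)
    -- c = c(τ̃,0) restricted to the susceptible coordinates
    (c : ℕ → ℝ)
    (hc : ∀ i, c i = z ^ i + (i : ℝ) * b * z * (z - qI) - pI * b * (i : ℝ) * z ^ i)
    -- the asymptotic variances of Theorem 1 (MR and NSW)
    (σMR2 σNSW2 : ℝ)
    (hMR : σMR2 =
      h ^ 2 * ((pI * qI + 2 * (z - qI) ^ 2) * μD
        - pI ^ 2 * ((1 - ε) * f1 (z ^ 2) + z ^ 2 * ((1 - ε) * f2 (z ^ 2))))
      + h * (2 * pI * z * ((1 - ε) * f1 (z ^ 2)) - (z - qI) * μD)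
      + 1 - ε - ρ - (1 - ε) * f0 (z ^ 2)
      + (q2 - qI ^ 2) * h ^ 2 * (f2 1 - (1 - ε) * f2 z))
    (hNSW : σNSW2 =
      ρ * (1 - ε - ρ) / (1 - ε)
      - h * (z - qI) * (1 - 2 * ε + 2 * ε * ρ / (1 - ε)) * μD
      + h ^ 2 * ((pI * qI - 2 * z * (z - qI)) * μD
          + (z - qI) ^ 2 * (σD2 + (1 - 2 * ε) / (1 - ε) * μD ^ 2))
      + (q2 - qI ^ 2) * h ^ 2 * (f2 1 - (1 - ε) * f2 z)) :
    σNSW2 - σMR2 =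
      (1 - ε) * ((∑ i ∈ Finset.range (dmax + 1), p i * c i ^ 2)
        - (∑ i ∈ Finset.range (dmax + 1), p i * c i) ^ 2)
      + ε * h ^ 2 * (z - qI) ^ 2 * σD2
    ∧ σMR2 < σNSW2 := by
  have hε : (1 : ℝ) - ε ≠ 0 := by linarith
  have hεpos : (0 : ℝ) < 1 - ε := by linarith
  have hμ : μD ≠ 0 := ne_of_gt hμpos
  have hzne : z ≠ 0 := ne_of_gt hz0
  have hpIne : pI ≠ 0 := ne_of_gt hpI
  have hdenne : (1 - pI * μD⁻¹ * ((1 - ε) * f2 z)) ≠ 0 := ne_of_gt hden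
  -- f1 z > 0
  have hf1pos : 0 < f1 z := by
    rw [hf1 z]
    obtain ⟨i0, hi01, hi0d, hpi0⟩ := hdeg
    refine Finset.sum_pos' (fun i _ => ?_) ⟨i0, Finset.mem_range.mpr (by omega), ?_⟩
    · exact mul_nonneg (mul_nonneg (Nat.cast_nonneg i) (hp i)) (le_of_lt (pow_pos hz0 _))
    · have : (0 : ℝ) < (i0 : ℝ) := by exact_mod_cast hi01
      exact mul_pos (mul_pos this hpi0) (pow_pos hz0 _)
  -- z - qI > 0
  have hApos : 0 < z - qI := by
    rw [hzeq]
    exact mul_pos (mul_pos (inv_pos.mpr hμpos) hpI) (mul_pos hεpos hf1pos)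
  -- h < 0, h ≠ 0
  have hhneg : h < 0 := by
    rw [hh]
    apply div_neg_of_neg_of_pos _ hden
    have : qI - z < 0 := by linarith
    exact mul_neg_of_pos_of_neg (inv_pos.mpr hpI) this
  have hhne : h ≠ 0 := ne_of_lt hhneg
  have h2pos : 0 < h ^ 2 := by nlinarith
  -- σD2 > 0
  have hvar : σD2 = ∑ i ∈ Finset.range (dmax + 1), p i * ((i : ℝ) - μD) ^ 2 := by
    have expand : ∑ i ∈ Finset.range (dmax + 1), p i * ((i : ℝ) - μD) ^ 2
        = (∑ i ∈ Finset.range (dmax + 1), (i : ℝ) ^ 2 * p i)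
          - 2 * μD * (∑ i ∈ Finset.range (dmax + 1), (i : ℝ) * p i)
          + μD ^ 2 * (∑ i ∈ Finset.range (dmax + 1), p i) := by
      rw [Finset.mul_sum, Finset.mul_sum, ← Finset.sum_sub_distrib, ← Finset.sum_add_distrib]
      exact Finset.sum_congr rfl fun i _ => by ring
    rw [hσD2, expand, hsum, ← hμD]; ring
  have hσpos : 0 < σD2 := by
    rw [hvar]
    obtain ⟨i, j, hid, hjd, hij, hpi, hpj⟩ := hnd
    refine Finset.sum_pos' (fun k _ => mul_nonneg (hp k) (sq_nonneg _)) ?_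
    rcases eq_or_ne ((i : ℝ)) μD with hi | hi
    · refine ⟨j, Finset.mem_range.mpr (by omega), ?_⟩
      have hjne : ((j : ℝ)) - μD ≠ 0 := by
        rw [← hi]
        intro hcon
        have : (j : ℝ) = (i : ℝ) := sub_eq_zero.mp hcon
        exact hij (Nat.cast_injective this).symm
      exact mul_pos hpj (by positivity)
    · refine ⟨i, Finset.mem_range.mpr (by omega), ?_⟩
      have hine : ((i : ℝ)) - μD ≠ 0 := sub_ne_zero.mpr hi
      exact mul_pos hpi (by positivity)
  -- per-term power lemmas
  have aux1 : ∀ (s : ℝ) (i : ℕ), (i : ℝ) * p i * s ^ i = s * ((i : ℝ) * p i * s ^ (i - 1)) := by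
    intro s i
    cases i with
    | zero => simp
    | succ n => rw [Nat.succ_sub_one, pow_succ]; ring
  have aux2 : ∀ (s : ℝ) (i : ℕ), (i : ℝ) ^ 2 * p i * s ^ i
      = s ^ 2 * ((i : ℝ) * ((i : ℝ) - 1) * p i * s ^ (i - 2))
        + s * ((i : ℝ) * p i * s ^ (i - 1)) := by
    intro s i
    match i with
    | 0 => simp
    | 1 => norm_num [mul_comm]
    | (n + 2) =>
      have e1 : n + 2 - 2 = n := by omega
      have e2 : n + 2 - 1 = n + 1 := by omega
      rw [e1, e2, pow_succ, pow_succ]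
      push_cast
      ring
  -- sum identities
  have sum1 : ∀ s : ℝ, ∑ i ∈ Finset.range (dmax + 1), (i : ℝ) * p i * s ^ i = s * f1 s := by
    intro s
    rw [hf1 s, Finset.mul_sum]
    exact Finset.sum_congr rfl fun i _ => aux1 s i
  have sum2 : ∀ s : ℝ, ∑ i ∈ Finset.range (dmax + 1), (i : ℝ) ^ 2 * p i * s ^ i
      = s ^ 2 * f2 s + s * f1 s := by
    intro s
    rw [hf2 s, hf1 s, Finset.mul_sum, Finset.mul_sum, ← Finset.sum_add_distrib]
    exact Finset.sum_congr rfl fun i _ => aux2 s i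
  have sumM2 : ∑ i ∈ Finset.range (dmax + 1), (i : ℝ) ^ 2 * p i = σD2 + μD ^ 2 := by
    rw [hσD2]; ring
  -- expectations of c and c²
  have hEC : ∑ i ∈ Finset.range (dmax + 1), p i * c i
      = f0 z + b * z * (z - qI) * μD - pI * b * (z * f1 z) := by
    have step : ∀ i ∈ Finset.range (dmax + 1), p i * c i
        = p i * z ^ i + (b * z * (z - qI)) * ((i : ℝ) * p i)
          - (pI * b) * ((i : ℝ) * p i * z ^ i) := fun i _ => by rw [hc i]; ring
    rw [Finset.sum_congr rfl step, Finset.sum_sub_distrib, Finset.sum_add_distrib,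
      ← Finset.mul_sum, ← Finset.mul_sum, ← hf0 z, ← hμD, sum1 z]
  have hEC2 : ∑ i ∈ Finset.range (dmax + 1), p i * c i ^ 2
      = f0 (z ^ 2) - 2 * pI * b * (z ^ 2 * f1 (z ^ 2))
        + pI ^ 2 * b ^ 2 * ((z ^ 2) ^ 2 * f2 (z ^ 2) + z ^ 2 * f1 (z ^ 2))
        + 2 * b * z * (z - qI) * (z * f1 z)
        - 2 * pI * b ^ 2 * z * (z - qI) * (z ^ 2 * f2 z + z * f1 z)
        + b ^ 2 * z ^ 2 * (z - qI) ^ 2 * (σD2 + μD ^ 2) := by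
    have step : ∀ i ∈ Finset.range (dmax + 1), p i * c i ^ 2
        = p i * (z ^ 2) ^ i - (2 * pI * b) * ((i : ℝ) * p i * (z ^ 2) ^ i)
          + (pI ^ 2 * b ^ 2) * ((i : ℝ) ^ 2 * p i * (z ^ 2) ^ i)
          + (2 * b * z * (z - qI)) * ((i : ℝ) * p i * z ^ i)
          - (2 * pI * b ^ 2 * z * (z - qI)) * ((i : ℝ) ^ 2 * p i * z ^ i)
          + (b ^ 2 * z ^ 2 * (z - qI) ^ 2) * ((i : ℝ) ^ 2 * p i) := by
      intro i _
      have hzz : (z ^ 2) ^ i = z ^ i * z ^ i := by rw [sq, mul_pow]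
      rw [hc i, hzz]; ring
    rw [Finset.sum_congr rfl step, Finset.sum_add_distrib, Finset.sum_sub_distrib,
      Finset.sum_add_distrib, Finset.sum_add_distrib, Finset.sum_sub_distrib,
      ← Finset.mul_sum, ← Finset.mul_sum, ← Finset.mul_sum, ← Finset.mul_sum, ← Finset.mul_sum,
      ← hf0 (z ^ 2), sum1 (z ^ 2), sum2 (z ^ 2), sum1 z, sum2 z, sumM2]
  -- solved forms of the scalar constraints
  have hS0 : f0 z = (1 - ε - ρ) / (1 - ε) := by
    rw [hρ]; field_simp; ring
  have e1 : (z - qI) * μD = pI * ((1 - ε) * f1 z) := by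
    rw [hzeq]; field_simp
  have hS1 : f1 z = (z - qI) * μD / (pI * (1 - ε)) := by
    rw [eq_div_iff (by positivity)]
    linear_combination -e1
  have step : h * (1 - pI * μD⁻¹ * ((1 - ε) * f2 z)) = pI⁻¹ * (qI - z) := by
    rw [hh, div_mul_cancel₀ _ hdenne]
  have e2 : pI * h * μD - pI ^ 2 * h * ((1 - ε) * f2 z) = (qI - z) * μD := by
    have expand : pI * μD - pI ^ 2 * ((1 - ε) * f2 z)
        = (pI * μD) * (1 - pI * μD⁻¹ * ((1 - ε) * f2 z)) := by
      field_simp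
    have key2 : h * (pI * μD - pI ^ 2 * ((1 - ε) * f2 z)) = (qI - z) * μD := by
      rw [expand, show h * ((pI * μD) * (1 - pI * μD⁻¹ * ((1 - ε) * f2 z)))
          = (pI * μD) * (h * (1 - pI * μD⁻¹ * ((1 - ε) * f2 z))) from by ring, step]
      field_simp
    linear_combination key2
  have hS2 : f2 z = (pI * h * μD - (qI - z) * μD) / (pI ^ 2 * h * (1 - ε)) := by
    rw [eq_div_iff (mul_ne_zero (mul_ne_zero (pow_ne_zero 2 hpIne) hhne) hε)]
    linear_combination -e2
  have hbz : b = h / z := by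
    rw [eq_div_iff hzne]; linear_combination -hb
  have key : σNSW2 - σMR2 =
      (1 - ε) * ((∑ i ∈ Finset.range (dmax + 1), p i * c i ^ 2)
        - (∑ i ∈ Finset.range (dmax + 1), p i * c i) ^ 2)
      + ε * h ^ 2 * (z - qI) ^ 2 * σD2 := by
    rw [hMR, hNSW, hEC, hEC2, hbz, hS0, hS1, hS2]
    field_simp
    ring
  refine ⟨key, ?_⟩
  -- positivity: Cauchy–Schwarz gives nonnegativity of the variance term
  have cs := Finset.sum_mul_sq_le_sq_mul_sq (Finset.range (dmax + 1))
    (fun i => Real.sqrt (p i)) (fun i => Real.sqrt (p i) * c i)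
  have csl : (∑ i ∈ Finset.range (dmax + 1), p i * c i) ^ 2
      ≤ ∑ i ∈ Finset.range (dmax + 1), p i * c i ^ 2 := by
    have e1' : ∀ i ∈ Finset.range (dmax + 1),
        Real.sqrt (p i) * (Real.sqrt (p i) * c i) = p i * c i := fun i _ => by
      rw [← mul_assoc, Real.mul_self_sqrt (hp i)]
    have e2' : ∀ i ∈ Finset.range (dmax + 1),
        (Real.sqrt (p i)) ^ 2 = p i := fun i _ => Real.sq_sqrt (hp i)
    have e3' : ∀ i ∈ Finset.range (dmax + 1),
        (Real.sqrt (p i) * c i) ^ 2 = p i * c i ^ 2 := fun i _ => by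
      rw [mul_pow, Real.sq_sqrt (hp i)]
    rw [Finset.sum_congr rfl e1', Finset.sum_congr rfl e2', Finset.sum_congr rfl e3',
      hsum, one_mul] at cs
    exact cs
  have hpos2 : 0 < ε * h ^ 2 * (z - qI) ^ 2 * σD2 :=
    mul_pos (mul_pos (mul_pos hε0 h2pos) (by positivity)) hσpos
  have vnn : 0 ≤ (1 - ε) * ((∑ i ∈ Finset.range (dmax + 1), p i * c i ^ 2)
      - (∑ i ∈ Finset.range (dmax + 1), p i * c i) ^ 2) :=
    mul_nonneg (le_of_lt hεpos) (by linarith [csl])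
  linarith [key, vnn, hpos2]
end
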